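/- Let p be a prime and let g₁ = diag(ζ₁^{a₁}, ζ₁^{b₁}, ζ₁^{c₁}) and g₂ = diag(ζ₂^{a₂}, ζ₂^{b₂}, ζ₂^{c₂}) where ζ₁ = exp(2πi/p^{n₁}), ζ₂ = exp(2πi/p^{n₂}), n₁ ≤ n₂, and a₁, a₂ are coprime with p. Suppose that no nontrivial element of the group generated by g₁ and g₂ has 1 as an eigenvalue. Then g₁ lies in the cyclic group generated by g₂. -/

import Mathlib

open Complex

/-- for a prime `p`, diagonal matrices
`g₁ = diag(ζ₁^a₁, ζ₁^b₁, ζ₁^c₁)` and `g₂ = diag(ζ₂^a₂, ζ₂^b₂, ζ₂^c₂)` in `GL(3,ℂ)`,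
with `ζᵢ = exp(2πi/p^{nᵢ})`, `n₁ ≤ n₂`, `a₁, a₂` coprime to `p`:
if no nontrivial element of the group generated by `g₁, g₂` has `1` as an
eigenvalue (a diagonal entry equal to `1`), then `g₁` lies in the cyclic group
generated by `g₂`. -/
theorem stmt3 (p : ℕ) (hp : p.Prime) (n₁ n₂ : ℕ) (hn₁ : 0 < n₁) (hn : n₁ ≤ n₂)
    (a₁ b₁ c₁ a₂ b₂ c₂ : ℤ)
    (ha₁ : Int.gcd a₁ p = 1) (ha₂ : Int.gcd a₂ p = 1)
    (ζ₁ ζ₂ : ℂ)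
    (hζ₁ : ζ₁ = Complex.exp (2 * Real.pi * Complex.I / (p ^ n₁ : ℕ)))
    (hζ₂ : ζ₂ = Complex.exp (2 * Real.pi * Complex.I / (p ^ n₂ : ℕ)))
    (g₁ g₂ : Matrix.GeneralLinearGroup (Fin 3) ℂ)
    (hg₁ : (g₁ : Matrix (Fin 3) (Fin 3) ℂ) = Matrix.diagonal ![ζ₁ ^ a₁, ζ₁ ^ b₁, ζ₁ ^ c₁])
    (hg₂ : (g₂ : Matrix (Fin 3) (Fin 3) ℂ) = Matrix.diagonal ![ζ₂ ^ a₂, ζ₂ ^ b₂, ζ₂ ^ c₂])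
    (hnoeig : ∀ h ∈ Subgroup.closure ({g₁, g₂} : Set (Matrix.GeneralLinearGroup (Fin 3) ℂ)),
      h ≠ 1 → ∀ i : Fin 3, (h : Matrix (Fin 3) (Fin 3) ℂ) i i ≠ 1) :
    g₁ ∈ Subgroup.zpowers g₂ := by
  have hp0 : (p : ℂ) ≠ 0 := Nat.cast_ne_zero.mpr hp.pos.ne'
  set d := n₂ - n₁ with hd
  have hdd : n₂ = n₁ + d := by omega
  have hζ₂0 : ζ₂ ≠ 0 := by rw [hζ₂]; exact Complex.exp_ne_zero _
  -- ζ₂ ^ p^n₂ = 1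
  have hroot : ζ₂ ^ ((p : ℤ) ^ n₂) = 1 := by
    have h1 : ζ₂ ^ (p ^ n₂ : ℕ) = 1 := by
      rw [hζ₂, ← Complex.exp_nat_mul]
      have hne : ((p ^ n₂ : ℕ) : ℂ) ≠ 0 := by
        exact_mod_cast pow_ne_zero n₂ hp0
      rw [mul_div_cancel₀ _ hne]
      exact Complex.exp_two_pi_mul_I
    calc ζ₂ ^ ((p : ℤ) ^ n₂) = ζ₂ ^ (((p ^ n₂ : ℕ) : ℤ)) := by push_cast; ring_nf
      _ = ζ₂ ^ (p ^ n₂ : ℕ) := zpow_natCast _ _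
      _ = 1 := h1
  -- ζ₁ = ζ₂ ^ p^d
  have hζ₁₂ : ζ₁ = ζ₂ ^ ((p : ℤ) ^ d) := by
    have h2 : ζ₂ ^ (p ^ d : ℕ) = ζ₁ := by
      rw [hζ₁, hζ₂, ← Complex.exp_nat_mul]
      congr 1
      have h3 : ((p ^ n₂ : ℕ) : ℂ) = ((p ^ n₁ : ℕ) : ℂ) * ((p ^ d : ℕ) : ℂ) := by
        push_cast; rw [hdd, pow_add]
      have hn1 : ((p ^ n₁ : ℕ) : ℂ) ≠ 0 := by exact_mod_cast pow_ne_zero n₁ hp0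
      have hn2 : ((p ^ n₂ : ℕ) : ℂ) ≠ 0 := by exact_mod_cast pow_ne_zero n₂ hp0
      field_simp [h3]
      rw [h3]; ring
    rw [← h2]
    rw [show ((p : ℤ) ^ d) = ((p ^ d : ℕ) : ℤ) by push_cast; ring, zpow_natCast]
  -- arithmetic: find k with p^n₂ ∣ p^d * a₁ + a₂ * k
  have hcop : IsCoprime a₂ ((p : ℤ) ^ n₂) :=
    (Int.isCoprime_iff_gcd_eq_one.mpr ha₂).pow_right
  obtain ⟨u, v, huv⟩ := hcop
  set M : ℤ := (p : ℤ) ^ n₂ with hM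
  have hMpos : 0 < M := pow_pos (by exact_mod_cast hp.pos) _
  set E : ℤ := (p : ℤ) ^ d * a₁ with hE
  set k' : ℤ := u * (-E) with hk'
  have hdvd' : M ∣ E + a₂ * k' := ⟨E * v, by linear_combination (-E) * huv⟩
  set k : ℕ := (k' % M).toNat with hk
  have hkZ : (k : ℤ) = k' % M := Int.toNat_of_nonneg (Int.emod_nonneg _ hMpos.ne')
  have hmod : (k : ℤ) ≡ k' [ZMOD M] := by
    rw [hkZ]; exact Int.emod_emod_of_dvd _ dvd_rfl
  have hdvd : M ∣ E + a₂ * (k : ℤ) := by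
    have h4 : M ∣ ((k : ℤ) - k') := hmod.symm.dvd
    have h5 : E + a₂ * (k : ℤ) = (E + a₂ * k') + a₂ * ((k : ℤ) - k') := by ring
    rw [h5]
    exact dvd_add hdvd' (h4.mul_left a₂)
  obtain ⟨t, ht⟩ := hdvd
  -- the entry of g₁ * g₂^k at (0,0) is 1
  have hentry : ((g₁ * g₂ ^ k : Matrix.GeneralLinearGroup (Fin 3) ℂ) : Matrix (Fin 3) (Fin 3) ℂ) 0 0 = 1 := by
    have : ((g₁ * g₂ ^ k : Matrix.GeneralLinearGroup (Fin 3) ℂ) : Matrix (Fin 3) (Fin 3) ℂ)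
        = Matrix.diagonal (![ζ₁ ^ a₁, ζ₁ ^ b₁, ζ₁ ^ c₁] * ![ζ₂ ^ a₂, ζ₂ ^ b₂, ζ₂ ^ c₂] ^ k) := by
      rw [Units.val_mul, Units.val_pow_eq_pow_val, hg₁, hg₂, Matrix.diagonal_pow,
        Matrix.diagonal_mul_diagonal]
      rfl
    rw [this, Matrix.diagonal_apply_eq]
    simp only [Pi.mul_apply, Pi.pow_apply, Matrix.cons_val_zero]
    calc ζ₁ ^ a₁ * (ζ₂ ^ a₂) ^ k
        = (ζ₂ ^ ((p:ℤ) ^ d)) ^ a₁ * (ζ₂ ^ a₂) ^ (k : ℤ) := by rw [hζ₁₂, zpow_natCast]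
      _ = ζ₂ ^ (E + a₂ * (k : ℤ)) := by
          rw [← zpow_mul, ← zpow_mul, ← zpow_add₀ hζ₂0, hE]
      _ = (ζ₂ ^ M) ^ t := by rw [ht, zpow_mul]
      _ = 1 := by rw [hM, hroot, one_zpow]
  -- hence g₁ * g₂^k = 1
  have hmem : g₁ * g₂ ^ k ∈ Subgroup.closure ({g₁, g₂} : Set (Matrix.GeneralLinearGroup (Fin 3) ℂ)) := by
    have h₁ := Subgroup.subset_closure (Set.mem_insert g₁ {g₂})
    have h₂ := Subgroup.subset_closure
      (Set.mem_insert_iff.mpr (Or.inr rfl) : g₂ ∈ ({g₁, g₂} : Set (Matrix.GeneralLinearGroup (Fin 3) ℂ)))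
    exact mul_mem h₁ (pow_mem h₂ k)
  have hone : g₁ * g₂ ^ k = 1 := by
    by_contra hne
    exact hnoeig _ hmem hne 0 hentry
  have : g₁ = g₂ ^ (-(k : ℤ)) := by
    rw [zpow_neg, zpow_natCast]
    exact mul_eq_one_iff_eq_inv.mp hone
  exact ⟨-(k : ℤ), this.symm⟩
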